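/- For S a set of odd integers greater than 1, the algebra 𝔪₀^S — with basis e_i (i ≥ 1) and z_r (r ∈ S), and brackets [e_1, e_i] = e_{i+1} for i ≥ 2, [e_l, e_{r-l+2}] = (-1)^{l+1} z_r for 2 ≤ l ≤ (r+1)/2 and r ∈ S, all z_r central — satisfies the Jacobi identity and hence is a Lie algebra. -/

import Mathlib

open Finsupp in
/-- Structure constants of 𝔪₀^S for a set `S` of odd integers `> 1`. Basis vectors are
indexed by `ℕ ⊕ ℕ`: `Sum.inl i` is `e i` (`i ≥ 1`; index 0 unused) and `Sum.inr r` is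
`z r` (`r ∈ S`; other indices unused). Relations: `[e 1, e i] = e (i+1)` for `i ≥ 2`,
`[e l, e (r-l+2)] = (-1)^(l+1) z r` for `2 ≤ l ≤ (r+1)/2`, `r ∈ S` (for `l, j ≥ 2` with
`r = l + j - 2 ∈ S` odd, the condition `l ≤ (r+1)/2` is equivalent to `l < j`), the `z r`
are central, all other brackets of basis vectors are zero, extended antisymmetrically. -/
noncomputable def m0Sc (K : Type*) [Field K] (S : Set ℕ) :
    ℕ ⊕ ℕ → ℕ ⊕ ℕ → ((ℕ ⊕ ℕ) →₀ K) := by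
  classical
  exact fun a b =>
    match a, b with
    | .inl i, .inl j =>
        if i = 1 ∧ 2 ≤ j then single (.inl (j + 1)) 1
        else if j = 1 ∧ 2 ≤ i then -single (.inl (i + 1)) 1
        else if 2 ≤ i ∧ 2 ≤ j ∧ i < j ∧ i + j - 2 ∈ S then
          (-1 : K) ^ (i + 1) • single (.inr (i + j - 2)) 1
        else if 2 ≤ i ∧ 2 ≤ j ∧ j < i ∧ i + j - 2 ∈ S then
          -((-1 : K) ^ (j + 1) • single (.inr (i + j - 2)) 1)
        else 0
    | _, _ => 0

/-- The bilinear extension of the bracket given by structure constants `c`. -/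
noncomputable def brkt {ι : Type*} (K : Type*) [Field K] (c : ι → ι → (ι →₀ K))
    (x y : ι →₀ K) : ι →₀ K :=
  x.sum fun i a => y.sum fun j b => (a * b) • c i j

section helpers
open Finsupp

variable {ι : Type*} {K : Type*} [Field K] (c : ι → ι → (ι →₀ K))

lemma brkt_zero_left (y : ι →₀ K) : brkt K c 0 y = 0 := by simp [brkt]

lemma brkt_zero_right (x : ι →₀ K) : brkt K c x 0 = 0 := by simp [brkt]

lemma brkt_add_left (x x' y : ι →₀ K) :
    brkt K c (x + x') y = brkt K c x y + brkt K c x' y := by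
  unfold brkt
  rw [Finsupp.sum_add_index'] <;> intros <;> simp [add_mul, add_smul, Finsupp.sum_add]

lemma brkt_add_right (x y y' : ι →₀ K) :
    brkt K c x (y + y') = brkt K c x y + brkt K c x y' := by
  unfold brkt
  rw [← Finsupp.sum_add]
  apply Finsupp.sum_congr
  intros i _
  rw [Finsupp.sum_add_index'] <;> intros <;> simp [mul_add, add_smul]

lemma brkt_smul_left (s : K) (x y : ι →₀ K) :
    brkt K c (s • x) y = s • brkt K c x y := by
  unfold brkt
  rw [Finsupp.sum_smul_index, Finsupp.smul_sum]
  · apply Finsupp.sum_congr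
    intros i _
    rw [Finsupp.smul_sum]
    apply Finsupp.sum_congr
    intros j _
    rw [smul_smul, mul_assoc]
  · intro i; simp

lemma brkt_smul_right (s : K) (x y : ι →₀ K) :
    brkt K c x (s • y) = s • brkt K c x y := by
  unfold brkt
  rw [Finsupp.smul_sum]
  apply Finsupp.sum_congr
  intros i _
  rw [Finsupp.sum_smul_index, Finsupp.smul_sum]
  · apply Finsupp.sum_congr
    intros j _
    rw [smul_smul]
    ring_nf
  · intro j; simp

lemma brkt_neg_left (x y : ι →₀ K) : brkt K c (-x) y = -brkt K c x y := by
  rw [← neg_one_smul K x, brkt_smul_left, neg_one_smul]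

lemma brkt_single_single (i j : ι) (a b : K) :
    brkt K c (single i a) (single j b) = (a * b) • c i j := by
  unfold brkt
  rw [Finsupp.sum_single_index, Finsupp.sum_single_index] <;> simp

lemma add3 {M : Type*} [AddCommGroup M] {a b c d e f : M}
    (h1 : a + b + c = 0) (h2 : d + e + f = 0) :
    (a + d) + (b + e) + (c + f) = 0 := by
  have h : (a + d) + (b + e) + (c + f) = (a + b + c) + (d + e + f) := by abel
  rw [h, h1, h2, add_zero]

end helpers

section m0S
open Finsupp

variable {K : Type*} [Field K] {S : Set ℕ}

lemma c_inr_left (r : ℕ) (b : ℕ ⊕ ℕ) : m0Sc K S (.inr r) b = 0 := by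
  cases b <;> rfl

lemma c_inr_right (a : ℕ ⊕ ℕ) (r : ℕ) : m0Sc K S a (.inr r) = 0 := by
  cases a <;> rfl

open Classical in
lemma c_inl_inl (i j : ℕ) : m0Sc K S (.inl i) (.inl j) =
    (if i = 1 ∧ 2 ≤ j then single (.inl (j + 1)) 1
        else if j = 1 ∧ 2 ≤ i then -single (.inl (i + 1)) 1
        else if 2 ≤ i ∧ 2 ≤ j ∧ i < j ∧ i + j - 2 ∈ S then
          (-1 : K) ^ (i + 1) • single (.inr (i + j - 2)) 1
        else if 2 ≤ i ∧ 2 ≤ j ∧ j < i ∧ i + j - 2 ∈ S then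
          -((-1 : K) ^ (j + 1) • single (.inr (i + j - 2)) 1)
        else 0) := by
  simp only [m0Sc]

lemma c_antisymm (a b : ℕ ⊕ ℕ) : m0Sc K S a b = -m0Sc K S b a := by
  obtain i | r := a <;> obtain j | r' := b
  · rw [c_inl_inl, c_inl_inl, show j + i - 2 = i + j - 2 from by omega]
    by_cases hA : i = 1 ∧ 2 ≤ j
    · rw [if_pos hA, if_neg (show ¬(j = 1 ∧ 2 ≤ i) from by omega), if_pos hA, neg_neg]
    · rw [if_neg hA]
      by_cases hB : j = 1 ∧ 2 ≤ i
      · rw [if_pos hB, if_pos hB]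
      · rw [if_neg hB, if_neg hB, if_neg hA]
        by_cases hC : 2 ≤ i ∧ 2 ≤ j ∧ i < j ∧ i + j - 2 ∈ S
        · obtain ⟨h1, h2, h3, h4⟩ := hC
          rw [if_pos ⟨h1, h2, h3, h4⟩, if_neg (show ¬(2 ≤ j ∧ 2 ≤ i ∧ j < i ∧ i + j - 2 ∈ S)
                from by rintro ⟨-, -, h, -⟩; omega),
              if_pos ⟨h2, h1, h3, h4⟩, neg_neg]
        · rw [if_neg hC]
          by_cases hD : 2 ≤ i ∧ 2 ≤ j ∧ j < i ∧ i + j - 2 ∈ S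
          · obtain ⟨h1, h2, h3, h4⟩ := hD
            rw [if_pos ⟨h1, h2, h3, h4⟩, if_pos ⟨h2, h1, h3, h4⟩]
          · rw [if_neg hD,
                if_neg (show ¬(2 ≤ j ∧ 2 ≤ i ∧ j < i ∧ i + j - 2 ∈ S) from
                  by rintro ⟨h1, h2, h3, h4⟩; exact hD ⟨h2, h1, h3, h4⟩),
                if_neg (show ¬(2 ≤ j ∧ 2 ≤ i ∧ i < j ∧ i + j - 2 ∈ S) from
                  by rintro ⟨h1, h2, h3, h4⟩; exact hC ⟨h2, h1, h3, h4⟩), neg_zero]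
  · simp [c_inr_left, c_inr_right]
  · simp [c_inr_left, c_inr_right]
  · simp [c_inr_left, c_inr_right]

open Classical in
lemma brkt_c_single (i j : ℕ) (d : ℕ ⊕ ℕ) :
    brkt K (m0Sc K S) (m0Sc K S (.inl i) (.inl j)) (single d (1 : K)) =
      if i = 1 ∧ 2 ≤ j then m0Sc K S (.inl (j + 1)) d
      else if j = 1 ∧ 2 ≤ i then -(m0Sc K S (.inl (i + 1)) d)
      else 0 := by
  rw [c_inl_inl]
  split_ifs with h1 h2 h3 h4
  · rw [brkt_single_single]; simp
  · rw [brkt_neg_left, brkt_single_single]; simp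
  · rw [brkt_smul_left, brkt_single_single]; simp [c_inr_left]
  · rw [brkt_neg_left, brkt_smul_left, brkt_single_single]; simp [c_inr_left]
  · exact brkt_zero_left _ _

lemma c_inl_zero_right (m : ℕ) : m0Sc K S (.inl m) (.inl 0) = 0 := by
  rw [c_inl_inl]
  rw [if_neg (by omega), if_neg (by omega),
      if_neg (by rintro ⟨-, h, -⟩; omega), if_neg (by rintro ⟨-, h, -⟩; omega)]

lemma key (hS : ∀ r ∈ S, Odd r ∧ 3 ≤ r) (j k : ℕ) (hj : 2 ≤ j) (hk : 2 ≤ k) :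
    m0Sc K S (.inl (j + 1)) (.inl k) = m0Sc K S (.inl (k + 1)) (.inl j) := by
  rw [c_inl_inl, c_inl_inl, show j + 1 + k - 2 = j + k - 1 from by omega,
      show k + 1 + j - 2 = j + k - 1 from by omega]
  by_cases hmem : j + k - 1 ∈ S
  · obtain ⟨m, hm⟩ := (hS _ hmem).1
    rcases lt_trichotomy j k with h | h | h
    · have hlt : j + 1 < k := by omega
      rw [if_neg (by omega), if_neg (by omega),
          if_pos ⟨by omega, by omega, hlt, hmem⟩,
          if_neg (by omega), if_neg (by omega),
          if_neg (by rintro ⟨-, -, h', -⟩; omega),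
          if_pos ⟨by omega, by omega, by omega, hmem⟩]
      simp [pow_succ]
    · subst h; rfl
    · have hlt : k + 1 < j := by omega
      rw [if_neg (by omega), if_neg (by omega),
          if_neg (by rintro ⟨-, -, h', -⟩; omega),
          if_pos ⟨by omega, by omega, by omega, hmem⟩,
          if_neg (by omega), if_neg (by omega),
          if_pos ⟨by omega, by omega, hlt, hmem⟩]
      simp [pow_succ]
  · rw [if_neg (by omega), if_neg (by omega),
        if_neg (by rintro ⟨-, -, -, h⟩; exact hmem h),
        if_neg (by rintro ⟨-, -, -, h⟩; exact hmem h),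
        if_neg (by omega), if_neg (by omega),
        if_neg (by rintro ⟨-, -, -, h⟩; exact hmem h),
        if_neg (by rintro ⟨-, -, -, h⟩; exact hmem h)]

lemma jacobi_one (hS : ∀ r ∈ S, Odd r ∧ 3 ≤ r) (j k : ℕ) :
    brkt K (m0Sc K S) (m0Sc K S (.inl 1) (.inl j)) (single (.inl k) 1) +
      brkt K (m0Sc K S) (m0Sc K S (.inl j) (.inl k)) (single (.inl 1) 1) +
      brkt K (m0Sc K S) (m0Sc K S (.inl k) (.inl 1)) (single (.inl j) 1) = 0 := by
  rw [brkt_c_single, brkt_c_single, brkt_c_single]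
  rcases (show j = 0 ∨ j = 1 ∨ 2 ≤ j from by omega) with rfl | rfl | hj <;>
    rcases (show k = 0 ∨ k = 1 ∨ 2 ≤ k from by omega) with rfl | rfl | hk
  · simp
  · simp
  · simp [hk, c_inl_zero_right]
  · simp
  · simp
  · simp [hk]
  · simp [hj, c_inl_zero_right]
  · simp [hj]
  · simp [hj, hk, show j ≠ 1 from by omega, show k ≠ 1 from by omega]
    rw [key hS j k hj hk]
    abel

lemma jacobi_inl (hS : ∀ r ∈ S, Odd r ∧ 3 ≤ r) (i j k : ℕ) :
    brkt K (m0Sc K S) (m0Sc K S (.inl i) (.inl j)) (single (.inl k) 1) +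
      brkt K (m0Sc K S) (m0Sc K S (.inl j) (.inl k)) (single (.inl i) 1) +
      brkt K (m0Sc K S) (m0Sc K S (.inl k) (.inl i)) (single (.inl j) 1) = 0 := by
  by_cases hi : i = 1
  · subst hi; exact jacobi_one hS j k
  by_cases hj : j = 1
  · subst hj; rw [add_rotate]; exact jacobi_one hS k i
  by_cases hk : k = 1
  · subst hk; rw [← add_rotate]; exact jacobi_one hS i j
  · rw [brkt_c_single, brkt_c_single, brkt_c_single,
        if_neg (by omega), if_neg (by omega), if_neg (by omega),
        if_neg (by omega), if_neg (by omega), if_neg (by omega)]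
    simp

lemma jacobi_single (hS : ∀ r ∈ S, Odd r ∧ 3 ≤ r) (a b d : ℕ ⊕ ℕ) :
    brkt K (m0Sc K S) (m0Sc K S a b) (single d 1) +
      brkt K (m0Sc K S) (m0Sc K S b d) (single a 1) +
      brkt K (m0Sc K S) (m0Sc K S d a) (single b 1) = 0 := by
  obtain i | r := a <;> obtain j | r' := b <;> obtain k | r'' := d
  · exact jacobi_inl hS i j k
  all_goals
    simp [brkt_c_single, c_inr_left, c_inr_right, brkt_zero_left]

end m0S

open Finsupp in
/-- For `S` a set of odd integers greater than 1, the bracket of 𝔪₀^S is antisymmetric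
and satisfies the Jacobi identity, hence 𝔪₀^S is a Lie algebra. -/
theorem m0S_is_lie_algebra (K : Type*) [Field K] (S : Set ℕ)
    (hS : ∀ r ∈ S, Odd r ∧ 3 ≤ r) :
    (∀ x y : (ℕ ⊕ ℕ) →₀ K, brkt K (m0Sc K S) x y = -brkt K (m0Sc K S) y x) ∧
    (∀ x y z : (ℕ ⊕ ℕ) →₀ K,
      brkt K (m0Sc K S) (brkt K (m0Sc K S) x y) z +
        brkt K (m0Sc K S) (brkt K (m0Sc K S) y z) x +
        brkt K (m0Sc K S) (brkt K (m0Sc K S) z x) y = 0) := by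
  constructor
  · intro x y
    induction x using Finsupp.induction_linear with
    | zero => simp [brkt_zero_left, brkt_zero_right]
    | add f g hf hg =>
        rw [brkt_add_left, brkt_add_right, hf, hg]; abel
    | single a s =>
        induction y using Finsupp.induction_linear with
        | zero => simp [brkt_zero_left, brkt_zero_right]
        | add f g hf hg =>
            rw [brkt_add_left, brkt_add_right, hf, hg]; abel
        | single b t =>
            rw [brkt_single_single, brkt_single_single, c_antisymm,
                mul_comm, smul_neg]
  · intro x y z
    induction x using Finsupp.induction_linear with
    | zero => simp [brkt_zero_left, brkt_zero_right]
    | add f g hf hg =>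
        simp only [brkt_add_left, brkt_add_right]
        exact add3 hf hg
    | single a s =>
      induction y using Finsupp.induction_linear with
      | zero => simp [brkt_zero_left, brkt_zero_right]
      | add f g hf hg =>
          simp only [brkt_add_left, brkt_add_right]
          exact add3 hf hg
      | single b t =>
        induction z using Finsupp.induction_linear with
        | zero => simp [brkt_zero_left, brkt_zero_right]
        | add f g hf hg =>
            simp only [brkt_add_left, brkt_add_right]
            exact add3 hf hg
        | single d u =>
            have e : ∀ (w : ℕ ⊕ ℕ) (v : K),
                (single w v : (ℕ ⊕ ℕ) →₀ K) = v • single w 1 := by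
              intro w v; rw [Finsupp.smul_single, smul_eq_mul, mul_one]
            rw [brkt_single_single, brkt_single_single, brkt_single_single,
                brkt_smul_left, brkt_smul_left, brkt_smul_left,
                e d u, e a s, e b t,
                brkt_smul_right, brkt_smul_right, brkt_smul_right,
                smul_smul, smul_smul, smul_smul,
                show s * t * u = (s * t) * u from rfl,
                show t * u * s = (s * t) * u from by ring,
                show u * s * t = (s * t) * u from by ring,
                ← smul_add, ← smul_add, jacobi_single hS, smul_zero]
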